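/- Let n ≥ 1 and 1 ≤ m ≤ n. Let R be an n×m real matrix with every entry equal to +1 or −1 such that Rᵀ·R = n·I_m. Let p1,…,pn ≥ 0 with p1+⋯+pn = 1 and P = diag(p1,…,pn). Then det(Rᵀ·P·R) ≤ 1, and equality holds when p1 = ⋯ = pn = 1/n; i.e., the uniform design maximizes det(Rᵀ·P·R) over the probability simplex. -/

import Mathlib

open Matrix

/-- Let `R` be an `n×m` matrix with ±1 entries and mutually orthogonal columns
(`Rᵀ·R = n·I_m`), and `P = diag(p1,…,pn)` with `pi ≥ 0` summing to `1`.  Then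
`det(Rᵀ·P·R) ≤ 1`, with equality for the uniform design `pi = 1/n`; i.e., the
uniform design maximizes `det(Rᵀ·P·R)` over the probability simplex. -/
theorem stmt17 (n m : ℕ) (hn : 1 ≤ n) (hm1 : 1 ≤ m) (hm : m ≤ n)
    (R : Matrix (Fin n) (Fin m) ℝ)
    (hR : ∀ i j, R i j = 1 ∨ R i j = -1)
    (horth : Rᵀ * R = (n : ℝ) • (1 : Matrix (Fin m) (Fin m) ℝ))
    (p : Fin n → ℝ) (hp : ∀ i, 0 ≤ p i) (hsum : ∑ i, p i = 1) :
    (Rᵀ * Matrix.diagonal p * R).det ≤ 1 ∧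
    (Rᵀ * Matrix.diagonal (fun _ : Fin n => (1 : ℝ) / n) * R).det = 1 := by
  have hn' : (0:ℝ) < n := by exact_mod_cast hn
  constructor
  · -- main inequality via AM-GM on the eigenvalues
    set A := Rᵀ * Matrix.diagonal p * R with hA
    have hct : Rᴴ = Rᵀ := by ext i j; simp [conjTranspose_apply]
    have hPSD : A.PosSemidef := by
      have hd : (Matrix.diagonal p).PosSemidef :=
        Matrix.posSemidef_diagonal_iff.mpr fun i => hp i
      simpa [hct] using hd.conjTranspose_mul_mul_same R
    have hH : A.IsHermitian := hPSD.1
    -- trace of A is m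
    have hsq : ∀ i j, R i j * R i j = 1 := by
      intro i j; rcases hR i j with h | h <;> rw [h] <;> norm_num
    have htrace : A.trace = (m : ℝ) := by
      have : ∀ j : Fin m, ∑ i, Rᵀ j i * p i * R i j = 1 := by
        intro j
        calc ∑ i, Rᵀ j i * p i * R i j = ∑ i, p i := by
              refine Finset.sum_congr rfl fun i _ => ?_
              simp only [transpose_apply]
              rw [mul_comm (R i j) (p i), mul_assoc, hsq i j, mul_one]
          _ = 1 := hsum
      simp only [hA, Matrix.trace, Matrix.diag_apply, Matrix.mul_apply,
        Matrix.diagonal_apply, mul_ite, mul_zero, Finset.sum_ite_eq',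
        Finset.mem_univ, if_true]
      rw [Finset.sum_congr rfl fun j _ => this j]
      simp
    -- trace = sum of eigenvalues
    have htr_eig : A.trace = ∑ i, hH.eigenvalues i := by
      have h1 := congrArg Matrix.trace hH.spectral_theorem
      rw [Unitary.conjStarAlgAut_apply] at h1
      nth_rewrite 2 [Matrix.trace_mul_cycle] at h1
      rw [(Matrix.mem_unitaryGroup_iff').mp (hH.eigenvectorUnitary).2, one_mul,
        Matrix.trace_diagonal] at h1
      simpa using h1
    have hdet : A.det = ∏ i, hH.eigenvalues i := by
      simpa using hH.det_eq_prod_eigenvalues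
    have hev : ∀ i, 0 ≤ hH.eigenvalues i := fun i => hPSD.eigenvalues_nonneg i
    -- AM-GM
    have hm' : (0:ℝ) < m := by exact_mod_cast hm1
    have hamgm := Real.geom_mean_le_arith_mean_weighted Finset.univ
      (fun _ : Fin m => (m : ℝ)⁻¹) hH.eigenvalues
      (fun i _ => by positivity)
      (by simp [Finset.sum_const, mul_inv_cancel₀ hm'.ne'])
      (fun i _ => hev i)
    have hrhs : ∑ i, (m:ℝ)⁻¹ * hH.eigenvalues i = 1 := by
      rw [← Finset.mul_sum, ← htr_eig, htrace, inv_mul_cancel₀ hm'.ne']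
    rw [hrhs] at hamgm
    -- from (∏ λᵢ^(1/m)) ≤ 1 conclude ∏ λᵢ ≤ 1
    have hprod_nonneg : 0 ≤ ∏ i, hH.eigenvalues i :=
      Finset.prod_nonneg fun i _ => hev i
    have hpow : (∏ i, hH.eigenvalues i) ^ ((m:ℝ)⁻¹) ≤ 1 := by
      rw [← Real.finset_prod_rpow _ _ (fun i _ => hev i)]
      exact hamgm
    have key : ∏ i, hH.eigenvalues i
        = (((∏ i, hH.eigenvalues i) ^ ((m:ℝ)⁻¹)) : ℝ) ^ (m : ℕ) := by
      rw [← Real.rpow_natCast ((∏ i, hH.eigenvalues i) ^ ((m:ℝ)⁻¹)) m,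
        ← Real.rpow_mul hprod_nonneg, inv_mul_cancel₀ hm'.ne', Real.rpow_one]
    rw [hdet, key]
    calc ((∏ i, hH.eigenvalues i) ^ ((m:ℝ)⁻¹)) ^ (m:ℕ) ≤ 1 ^ (m:ℕ) :=
          pow_le_pow_left₀ (Real.rpow_nonneg hprod_nonneg _) hpow _
      _ = 1 := one_pow _
  · -- equality for the uniform design
    have hdiag : Matrix.diagonal (fun _ : Fin n => (1:ℝ)/n)
        = ((1:ℝ)/n) • (1 : Matrix (Fin n) (Fin n) ℝ) := by
      ext i j
      by_cases h : i = j <;> simp [Matrix.diagonal_apply, Matrix.one_apply, h]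
    rw [hdiag, Matrix.mul_smul, Matrix.smul_mul, Matrix.mul_one, horth, smul_smul,
      one_div, inv_mul_cancel₀ hn'.ne', one_smul, Matrix.det_one]
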